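/- Fix polynomial coefficient functions v, b̃ⱼ, bⱼ : [0,1] → ℝ and abscissae cⱼ, and suppose Γₖ ≡ 0 on [0,1] for k = 1,...,p̃ (so the method has uniform stage order p̃ in its output component). Then the method has uniform order p̃+1 for the output (i.e. for every C^{p̃+2} function y, the error Ẽ^{s+1}(αh) = (1-v(α))y(-h) + v(α)y(0) + hΣⱼb̃ⱼ(α)y'(-h+cⱼh) + hΣⱼbⱼ(α)y'(cⱼh) - y(αh) is O(h^{p̃+2}) uniformly in α ∈ [0,1]) if and only if Γ_{p̃+1} ≡ 0 on [0,1]. -/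

import Mathlib

/-- The quantity Γₖ(α) for the output component of a two-step GLM with
polynomial coefficient functions v, b̃ⱼ, bⱼ and abscissae cⱼ. -/
noncomputable def outGamma (s : ℕ) (cj : Fin s → ℝ) (v : Polynomial ℝ)
    (tb b : Fin s → Polynomial ℝ) (k : ℕ) (α : ℝ) : ℝ :=
  (1 / (Nat.factorial (k - 1) : ℝ)) *
    ((1 - v.eval α) * (-1) ^ k / k
      + ∑ j, (tb j).eval α * (-(1 - cj j)) ^ (k - 1)
      + ∑ j, (b j).eval α * (cj j) ^ (k - 1)
      - α ^ k / k)

/-- The output-error function Ẽ^{s+1}(αh) of a two-step GLM applied to a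
function y. -/
noncomputable def outError (s : ℕ) (cj : Fin s → ℝ) (v : Polynomial ℝ)
    (tb b : Fin s → Polynomial ℝ) (y : ℝ → ℝ) (h α : ℝ) : ℝ :=
  (1 - v.eval α) * y (-h) + v.eval α * y 0
    + h * ∑ j, (tb j).eval α * deriv y (-h + cj j * h)
    + h * ∑ j, (b j).eval α * deriv y (cj j * h)
    - y (α * h)

open Set intervalIntegral Finset

/-- Integral growth bound: if `r 0 = 0` and `|r'| ≤ C|t|^m` on `[-1,1]`,
then `|r x| ≤ C|x|^{m+1}/(m+1)` for `|x| ≤ 1`. -/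
lemma grow_aux (r : ℝ → ℝ) (hr : Differentiable ℝ r) (hr' : Continuous (deriv r))
    (h0 : r 0 = 0) (C : ℝ) (m : ℕ)
    (hb : ∀ t ∈ Set.Icc (-1:ℝ) 1, |deriv r t| ≤ C * |t| ^ m)
    (x : ℝ) (hx : |x| ≤ 1) : |r x| ≤ C * |x| ^ (m+1) / (m+1) := by
  have hx1 : -1 ≤ x := neg_le_of_abs_le hx
  have hx2 : x ≤ 1 := le_of_abs_le hx
  rcases le_or_gt 0 x with hx0 | hx0
  · have hxabs : |x| = x := abs_of_nonneg hx0
    have hftc : ∫ t in (0:ℝ)..x, deriv r t = r x - r 0 :=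
      integral_deriv_eq_sub (fun t _ => hr t) (hr'.intervalIntegrable 0 x)
    have h1 : |r x| = |∫ t in (0:ℝ)..x, deriv r t| := by rw [hftc, h0, sub_zero]
    have h2 : |∫ t in (0:ℝ)..x, deriv r t| ≤ ∫ t in (0:ℝ)..x, |deriv r t| :=
      abs_integral_le_integral_abs hx0
    have h3 : ∫ t in (0:ℝ)..x, |deriv r t| ≤ ∫ t in (0:ℝ)..x, C * t ^ m := by
      apply integral_mono_on hx0 (hr'.abs.intervalIntegrable 0 x)
        ((continuous_const.mul (continuous_pow m)).intervalIntegrable 0 x)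
      intro t ht
      have h4 := hb t ⟨by linarith [ht.1], le_trans ht.2 hx2⟩
      rwa [abs_of_nonneg ht.1] at h4
    have h5 : ∫ t in (0:ℝ)..x, C * t ^ m = C * (x ^ (m+1) / (m+1)) := by
      rw [integral_const_mul, integral_pow]; ring
    rw [hxabs]
    calc |r x| ≤ ∫ t in (0:ℝ)..x, C * t ^ m := by rw [h1]; exact le_trans h2 h3
      _ = C * x ^ (m+1) / (m+1) := by rw [h5]; ring
  · have hxabs : |x| = -x := abs_of_neg hx0
    have hftc : ∫ t in x..(0:ℝ), deriv r t = r 0 - r x :=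
      integral_deriv_eq_sub (fun t _ => hr t) (hr'.intervalIntegrable x 0)
    have h1 : |r x| = |∫ t in x..(0:ℝ), deriv r t| := by
      rw [hftc, h0, zero_sub, abs_neg]
    have h2 : |∫ t in x..(0:ℝ), deriv r t| ≤ ∫ t in x..(0:ℝ), |deriv r t| :=
      abs_integral_le_integral_abs hx0.le
    have h3 : ∫ t in x..(0:ℝ), |deriv r t| ≤ ∫ t in x..(0:ℝ), C * (-t) ^ m := by
      apply integral_mono_on hx0.le (hr'.abs.intervalIntegrable x 0)
        ((continuous_const.mul ((continuous_neg).pow m)).intervalIntegrable x 0)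
      intro t ht
      have h4 := hb t ⟨le_trans hx1 ht.1, by linarith [ht.2]⟩
      rwa [abs_of_nonpos ht.2] at h4
    have h5 : ∫ t in x..(0:ℝ), C * (-t) ^ m = C * ((-x) ^ (m+1) / (m+1)) := by
      rw [integral_const_mul]
      have := integral_comp_neg (a := x) (b := (0:ℝ)) (fun t => t ^ m)
      rw [this, neg_zero, integral_pow]
      ring
    rw [hxabs]
    calc |r x| ≤ ∫ t in x..(0:ℝ), C * (-t) ^ m := by rw [h1]; exact le_trans h2 h3
      _ = C * (-x) ^ (m+1) / (m+1) := by rw [h5]; ring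

/-- A uniform Taylor remainder bound on `[-1,1]`. -/
lemma taylor_aux (n : ℕ) : ∀ (f : ℝ → ℝ) (M : ℝ),
    ContDiff ℝ (n+1 : ℕ) f →
    (∀ x ∈ Set.Icc (-1:ℝ) 1, |iteratedDeriv (n+1) f x| ≤ M) →
    ∀ x : ℝ, |x| ≤ 1 →
    |f x - ∑ k ∈ Finset.range (n+1), iteratedDeriv k f 0 / (Nat.factorial k : ℝ) * x ^ k|
      ≤ M * |x| ^ (n+1) / (Nat.factorial (n+1) : ℝ) := by
  induction n with
  | zero =>
    intro f M hf hM x hx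
    have hd : Differentiable ℝ f := hf.differentiable (by norm_cast)
    have hc : Continuous (deriv f) := (contDiff_one_iff_deriv.mp (by exact_mod_cast hf)).2
    have := grow_aux (fun t => f t - f 0) (hd.sub_const _) (by
        have : deriv (fun t => f t - f 0) = deriv f := by
          funext t; rw [deriv_sub_const]
        rw [this]; exact hc)
      (by simp) M 0 (by
        intro t ht
        rw [deriv_sub_const]
        simpa using hM t (by simpa [iteratedDeriv_one] using ht) |>.trans_eq (by ring)) x hx
    simpa [iteratedDeriv_one] using this
  | succ n ih =>
    intro f M hf hM x hx
    have hcast : ((n+1+1 : ℕ) : WithTop ℕ∞) = ((n+1 : ℕ) : WithTop ℕ∞) + 1 := by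
      push_cast; ring
    obtain ⟨hd, -, hg⟩ :=
      (contDiff_succ_iff_deriv (n := ((n+1:ℕ) : WithTop ℕ∞))).mp (hcast ▸ hf)
    have hMg : ∀ t ∈ Set.Icc (-1:ℝ) 1, |iteratedDeriv (n+1) (deriv f) t| ≤ M := by
      intro t ht; rw [← iteratedDeriv_succ']; exact hM t ht
    have ihg := ih (deriv f) M hg hMg
    set c : ℕ → ℝ := fun k => iteratedDeriv k f 0 / (Nat.factorial k : ℝ) with hc
    set r : ℝ → ℝ := fun t => f t - ∑ k ∈ Finset.range (n+2), c k * t ^ k with hrdef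
    have hP : ∀ t : ℝ, HasDerivAt (fun u : ℝ => ∑ k ∈ Finset.range (n+2), c k * u ^ k)
        (∑ k ∈ Finset.range (n+2), c k * (k * t ^ (k-1))) t := fun t =>
      HasDerivAt.fun_sum fun k _ => (hasDerivAt_pow k t).const_mul (c k)
    have hR : ∀ t : ℝ, HasDerivAt r
        (deriv f t - ∑ k ∈ Finset.range (n+2), c k * (k * t ^ (k-1))) t := fun t =>
      ((hd t).hasDerivAt).sub (hP t)
    have hterm : ∀ (k : ℕ) (t : ℝ), c (k+1) * ((k+1) * t ^ k)
        = iteratedDeriv k (deriv f) 0 / (Nat.factorial k : ℝ) * t ^ k := by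
      intro k t
      have hk : ((Nat.factorial k : ℝ)) ≠ 0 := Nat.cast_ne_zero.mpr (Nat.factorial_ne_zero k)
      rw [hc]
      simp only [iteratedDeriv_succ' (n := k) (f := f), Nat.factorial_succ]
      push_cast
      field_simp
    have hderiv : deriv r = fun t => deriv f t
        - ∑ k ∈ Finset.range (n+1),
            iteratedDeriv k (deriv f) 0 / (Nat.factorial k : ℝ) * t ^ k := by
      funext t
      rw [(hR t).deriv]
      congr 1
      rw [Finset.sum_range_succ']
      simp only [Nat.add_sub_cancel, Nat.cast_zero, zero_mul, mul_zero, add_zero, Nat.cast_add,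
        Nat.cast_one]
      refine Finset.sum_congr rfl fun k _ => ?_
      exact_mod_cast hterm k t
    have hdiff : Differentiable ℝ r := fun t => (hR t).differentiableAt
    have hcont : Continuous (deriv r) := by
      rw [hderiv]
      exact hg.continuous.sub
        (continuous_finset_sum _ fun k _ => continuous_const.mul (continuous_pow k))
    have hr0 : r 0 = 0 := by
      rw [hrdef]
      simp only [hc]
      rw [Finset.sum_range_succ']
      simp
    have hbound : ∀ t ∈ Set.Icc (-1:ℝ) 1, |deriv r t|
        ≤ (M / (Nat.factorial (n+1) : ℝ)) * |t| ^ (n+1) := by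
      intro t ht
      rw [hderiv]
      have := ihg t (abs_le.mpr ⟨ht.1, ht.2⟩)
      calc |deriv f t - ∑ k ∈ Finset.range (n+1),
            iteratedDeriv k (deriv f) 0 / (Nat.factorial k : ℝ) * t ^ k|
          ≤ M * |t| ^ (n+1) / (Nat.factorial (n+1) : ℝ) := this
        _ = (M / (Nat.factorial (n+1) : ℝ)) * |t| ^ (n+1) := by ring
    have hgrow := grow_aux r hdiff hcont hr0 (M / (Nat.factorial (n+1) : ℝ)) (n+1) hbound x hx
    calc |f x - ∑ k ∈ Finset.range (n+1+1), iteratedDeriv k f 0 / (Nat.factorial k : ℝ) * x ^ k|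
        = |r x| := rfl
      _ ≤ M / (Nat.factorial (n+1) : ℝ) * |x| ^ (n+1+1) / (↑(n+1) + 1) := hgrow
      _ = M * |x| ^ (n+1+1) / ((↑(n+1) + 1) * (Nat.factorial (n+1) : ℝ)) := by
          rw [div_mul_eq_mul_div, div_div, mul_comm ((Nat.factorial (n+1) : ℝ)) ((↑(n+1) : ℝ) + 1)]
      _ = M * |x| ^ (n+1+1) / (Nat.factorial (n+1+1) : ℝ) := by
          congr 1
          rw [Nat.factorial_succ (n+1)]
          push_cast
          ring

section outErrorLemmas

variable {s : ℕ} {cj : Fin s → ℝ} {v : Polynomial ℝ} {tb b : Fin s → Polynomial ℝ}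

lemma outError_const (c h α : ℝ) :
    outError s cj v tb b (fun _ => c) h α = 0 := by
  unfold outError
  simp only [deriv_const]
  simp
  ring

lemma outError_monomial (m : ℕ) (h α : ℝ) :
    outError s cj v tb b (fun x => x ^ (m+1)) h α
      = ((Nat.factorial (m+1) : ℝ) * outGamma s cj v tb b (m+1) α) * h ^ (m+1) := by
  have hd : deriv (fun x : ℝ => x ^ (m+1)) = fun x : ℝ => ((m:ℝ)+1) * x ^ m := by
    funext x
    rw [deriv_pow_field]
    push_cast
    simp
  unfold outError outGamma
  rw [hd]
  simp only [Nat.add_sub_cancel]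
  have s1 : ∑ j, (tb j).eval α * (((m:ℝ)+1) * (-h + cj j * h) ^ m)
      = (∑ j, (tb j).eval α * (-(1 - cj j)) ^ m) * (((m:ℝ)+1) * h ^ m) := by
    rw [Finset.sum_mul]
    refine Finset.sum_congr rfl fun j _ => ?_
    rw [show (-h + cj j * h) = (-(1 - cj j)) * h by ring, mul_pow]
    ring
  have s2 : ∑ j, (b j).eval α * (((m:ℝ)+1) * (cj j * h) ^ m)
      = (∑ j, (b j).eval α * (cj j) ^ m) * (((m:ℝ)+1) * h ^ m) := by
    rw [Finset.sum_mul]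
    refine Finset.sum_congr rfl fun j _ => ?_
    rw [mul_pow]
    ring
  rw [s1, s2]
  have hm : ((Nat.factorial m : ℝ)) ≠ 0 := Nat.cast_ne_zero.mpr (Nat.factorial_ne_zero m)
  have hm1 : ((m:ℝ) + 1) ≠ 0 := by positivity
  rw [Nat.factorial_succ]
  push_cast
  rw [show ((-h) ^ (m+1) : ℝ) = (-1)^(m+1) * h^(m+1) by rw [← neg_one_mul, mul_pow],
    show ((α*h) ^ (m+1) : ℝ) = α^(m+1) * h^(m+1) by rw [mul_pow],
    show ((0:ℝ) ^ (m+1)) = 0 by simp]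
  field_simp
  ring

lemma outError_add (y z : ℝ → ℝ) (hy : Differentiable ℝ y) (hz : Differentiable ℝ z)
    (h α : ℝ) :
    outError s cj v tb b (fun x => y x + z x) h α
      = outError s cj v tb b y h α + outError s cj v tb b z h α := by
  unfold outError
  have hd : deriv (fun x => y x + z x) = fun x => deriv y x + deriv z x := by
    funext x; exact deriv_add (hy x) (hz x)
  rw [hd]
  simp only [mul_add, Finset.sum_add_distrib]
  ring

lemma outError_smul (c : ℝ) (y : ℝ → ℝ) (hy : Differentiable ℝ y) (h α : ℝ) :
    outError s cj v tb b (fun x => c * y x) h α = c * outError s cj v tb b y h α := by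
  unfold outError
  have hd : deriv (fun x => c * y x) = fun x => c * deriv y x := by
    funext x; exact deriv_const_mul c (hy x)
  rw [hd]
  simp only [Finset.mul_sum]
  have t1 : ∑ i, h * (Polynomial.eval α (tb i) * (c * deriv y (-h + cj i * h)))
      = c * ∑ i, h * (Polynomial.eval α (tb i) * deriv y (-h + cj i * h)) := by
    rw [Finset.mul_sum]; exact Finset.sum_congr rfl fun j _ => by ring
  have t2 : ∑ i, h * (Polynomial.eval α (b i) * (c * deriv y (cj i * h)))
      = c * ∑ i, h * (Polynomial.eval α (b i) * deriv y (cj i * h)) := by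
    rw [Finset.mul_sum]; exact Finset.sum_congr rfl fun j _ => by ring
  rw [t1, t2]
  ring

lemma psum_hasDerivAt (a : ℕ → ℝ) (N : ℕ) (t : ℝ) :
    HasDerivAt (fun x : ℝ => ∑ k ∈ Finset.range N, a k * x ^ k)
      (∑ k ∈ Finset.range N, a k * (k * t ^ (k-1))) t :=
  HasDerivAt.fun_sum fun k _ => (hasDerivAt_pow k t).const_mul (a k)

lemma psum_diff (a : ℕ → ℝ) (N : ℕ) :
    Differentiable ℝ (fun x : ℝ => ∑ k ∈ Finset.range N, a k * x ^ k) :=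
  fun t => (psum_hasDerivAt a N t).differentiableAt

lemma outError_psum (a : ℕ → ℝ) (N : ℕ) (h α : ℝ) :
    outError s cj v tb b (fun x => ∑ k ∈ Finset.range N, a k * x ^ k) h α
      = ∑ k ∈ Finset.range N, a k * outError s cj v tb b (fun x => x ^ k) h α := by
  induction N with
  | zero =>
    simp only [Finset.range_zero, Finset.sum_empty]
    exact outError_const 0 h α
  | succ N ih =>
    have e : (fun x : ℝ => ∑ k ∈ Finset.range (N+1), a k * x ^ k)
        = fun x => (∑ k ∈ Finset.range N, a k * x ^ k) + a N * x ^ N := by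
      funext x; rw [Finset.sum_range_succ]
    rw [e, outError_add _ _ (psum_diff a N) ((differentiable_pow N).const_mul _) h α, ih,
      outError_smul _ _ (differentiable_pow N) h α, Finset.sum_range_succ]

lemma outError_sub (y P : ℝ → ℝ) (hy : Differentiable ℝ y) (hP : Differentiable ℝ P)
    (h α : ℝ) :
    outError s cj v tb b (fun x => y x - P x) h α
      = outError s cj v tb b y h α - outError s cj v tb b P h α := by
  unfold outError
  have hd : deriv (fun x => y x - P x) = fun x => deriv y x - deriv P x := by
    funext x; exact deriv_sub (hy x) (hP x)
  rw [hd]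
  simp only [mul_sub, Finset.sum_sub_distrib]
  ring

end outErrorLemmas

theorem stmt11 (s : ℕ) (cj : Fin s → ℝ) (hcj : ∀ j, cj j ∈ Set.Icc (0:ℝ) 1)
    (v : Polynomial ℝ) (tb b : Fin s → Polynomial ℝ) (p : ℕ)
    (hΓ : ∀ α ∈ Set.Icc (0:ℝ) 1, ∀ k, 1 ≤ k → k ≤ p →
      outGamma s cj v tb b k α = 0) :
    (∀ y : ℝ → ℝ, ContDiff ℝ (p + 2) y →
      ∃ D > (0:ℝ), ∃ H > (0:ℝ), ∀ α ∈ Set.Icc (0:ℝ) 1, ∀ h ∈ Set.Icc (0:ℝ) H,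
        |outError s cj v tb b y h α| ≤ D * h ^ (p + 2))
    ↔ (∀ α ∈ Set.Icc (0:ℝ) 1, outGamma s cj v tb b (p + 1) α = 0) := by
  constructor
  · -- order implies Γ_{p+1} = 0
    intro hbig α hα
    obtain ⟨D, hD, H, hH, hb⟩ := hbig (fun x => x ^ (p+1))
      (by exact contDiff_id.pow (p+1))
    by_contra hne
    set G : ℝ := |((Nat.factorial (p+1) : ℝ) * outGamma s cj v tb b (p+1) α)| with hG
    have hGpos : 0 < G := by
      rw [hG]
      apply abs_pos.mpr
      intro hcon
      rcases mul_eq_zero.mp hcon with h1 | h1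
      · exact Nat.cast_ne_zero.mpr (Nat.factorial_ne_zero _) h1
      · exact hne h1
    set h : ℝ := min H (G / (2 * D)) with hh
    have hhpos : 0 < h := lt_min hH (by positivity)
    have hhH : h ≤ H := min_le_left _ _
    have hbd := hb α hα h ⟨hhpos.le, hhH⟩
    rw [outError_monomial p h α] at hbd
    rw [abs_mul, abs_of_pos (pow_pos hhpos (p+1))] at hbd
    have hpow : h ^ (p+2) = h ^ (p+1) * h := by rw [pow_succ]
    rw [hpow] at hbd
    have hG2 : G ≤ D * h := by
      have := pow_pos hhpos (p+1)
      nlinarith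
    have hG3 : D * h ≤ G / 2 := by
      have h2 : h ≤ G / (2 * D) := min_le_right _ _
      have : D * (G / (2 * D)) = G / 2 := by field_simp
      nlinarith
    linarith
  · -- Γ_{p+1} = 0 implies order
    intro hΓ1 y hy
    have hy' : ContDiff ℝ ((p+1+1 : ℕ) : WithTop ℕ∞) y := by exact_mod_cast hy
    -- bound for the (p+2)-nd derivative on [-1,1]
    have hcontD : Continuous (iteratedDeriv (p+2) y) :=
      hy'.continuous_iteratedDeriv (p+2) (by exact_mod_cast le_refl _)
    obtain ⟨M, hM⟩ := (isCompact_Icc (a := (-1:ℝ)) (b := 1)).exists_bound_of_continuousOn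
      hcontD.continuousOn
    have hM' : ∀ x ∈ Set.Icc (-1:ℝ) 1, |iteratedDeriv (p+1+1) y x| ≤ M := by
      intro x hx; simpa [Real.norm_eq_abs] using hM x hx
    have hMnn : 0 ≤ M := le_trans (abs_nonneg _) (hM' 0 (by norm_num))
    -- bound for coefficient polynomials on [0,1]
    set F : ℝ → ℝ := fun t => |1 - v.eval t| + (∑ j, |(tb j).eval t|)
      + (∑ j, |(b j).eval t|) + 1 with hF
    have hFc : Continuous F := by
      apply Continuous.add
      apply Continuous.add
      apply Continuous.add
      · exact (continuous_const.sub v.continuous_aeval).abs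
      · exact continuous_finset_sum _ fun j _ => (tb j).continuous_aeval.abs
      · exact continuous_finset_sum _ fun j _ => (b j).continuous_aeval.abs
      · exact continuous_const
    obtain ⟨K, hK⟩ := (isCompact_Icc (a := (0:ℝ)) (b := 1)).exists_bound_of_continuousOn
      hFc.continuousOn
    have hK' : ∀ t ∈ Set.Icc (0:ℝ) 1, F t ≤ K := by
      intro t ht; exact le_trans (le_abs_self _) (by simpa [Real.norm_eq_abs] using hK t ht)
    have hKnn : 0 ≤ K := by
      have := hK' 0 (by norm_num)
      have hF0 : 0 < F 0 := by
        rw [hF]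
        have : (0:ℝ) ≤ |1 - v.eval 0| + (∑ j, |(tb j).eval 0|) + (∑ j, |(b j).eval 0|) := by
          positivity
        simp only []
        linarith
      linarith
    refine ⟨K * M / (Nat.factorial (p+1) : ℝ) + 1, by positivity, 1, one_pos, ?_⟩
    intro α hα h hh
    obtain ⟨hh0, hh1⟩ := hh
    obtain ⟨hα0, hα1⟩ := hα
    have habs : |h| ≤ 1 := by rw [abs_of_nonneg hh0]; exact hh1
    -- Taylor polynomial of y at 0
    set a : ℕ → ℝ := fun k => iteratedDeriv k y 0 / (Nat.factorial k : ℝ) with ha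
    set P : ℝ → ℝ := fun x => ∑ k ∈ Finset.range (p+2), a k * x ^ k with hPdef
    have hPdiff : Differentiable ℝ P := psum_diff a (p+2)
    have hydiff : Differentiable ℝ y :=
      hy'.differentiable (by simp)
    have hcast2 : ((p+1+1 : ℕ) : WithTop ℕ∞) = ((p+1 : ℕ) : WithTop ℕ∞) + 1 := by
      push_cast; ring
    obtain ⟨-, -, hgy⟩ :=
      (contDiff_succ_iff_deriv (n := ((p+1:ℕ) : WithTop ℕ∞))).mp (hcast2 ▸ hy')
    have hMg : ∀ t ∈ Set.Icc (-1:ℝ) 1, |iteratedDeriv (p+1) (deriv y) t| ≤ M := by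
      intro t ht; rw [← iteratedDeriv_succ']; exact hM' t ht
    have t1 := taylor_aux (p+1) y M hy' hM'
    have t2 := taylor_aux p (deriv y) M hgy hMg
    -- the derivative of the Taylor polynomial
    have hterm : ∀ (k : ℕ) (t : ℝ), a (k+1) * ((k+1) * t ^ k)
        = iteratedDeriv k (deriv y) 0 / (Nat.factorial k : ℝ) * t ^ k := by
      intro k t
      have hk : ((Nat.factorial k : ℝ)) ≠ 0 := Nat.cast_ne_zero.mpr (Nat.factorial_ne_zero k)
      rw [ha]
      simp only [iteratedDeriv_succ' (n := k) (f := y), Nat.factorial_succ]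
      push_cast
      field_simp
    have hderivP : deriv P = fun t => ∑ k ∈ Finset.range (p+1),
        iteratedDeriv k (deriv y) 0 / (Nat.factorial k : ℝ) * t ^ k := by
      funext t
      rw [hPdef, (psum_hasDerivAt a (p+2) t).deriv, Finset.sum_range_succ']
      simp only [Nat.add_sub_cancel, Nat.cast_zero, zero_mul, mul_zero, add_zero, Nat.cast_add,
        Nat.cast_one]
      exact Finset.sum_congr rfl fun k _ => by exact_mod_cast hterm k t
    -- remainder bounds
    have hrb : ∀ x : ℝ, |x| ≤ 1 →
        |y x - P x| ≤ M * |x| ^ (p+2) / (Nat.factorial (p+2) : ℝ) := by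
      intro x hx
      have := t1 x hx
      simpa [hPdef, ha] using this
    have hdrb : ∀ t : ℝ, |t| ≤ 1 →
        |deriv y t - deriv P t| ≤ M * |t| ^ (p+1) / (Nat.factorial (p+1) : ℝ) := by
      intro t ht
      rw [hderivP]
      exact t2 t ht
    -- split the error
    have hsplit : outError s cj v tb b y h α = outError s cj v tb b P h α
        + outError s cj v tb b (fun x => y x - P x) h α := by
      rw [outError_sub y P hydiff hPdiff]; ring
    -- the polynomial part has zero error
    have hOP : outError s cj v tb b P h α = 0 := by
      rw [hPdef, outError_psum, Finset.sum_range_succ']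
      have h0 : outError s cj v tb b (fun x => x ^ 0) h α = 0 := by
        have e0 : (fun x : ℝ => x ^ 0) = fun _ => (1:ℝ) := by funext x; simp
        rw [e0]; exact outError_const 1 h α
      rw [h0, mul_zero, add_zero]
      apply Finset.sum_eq_zero
      intro k hk
      rw [outError_monomial k h α]
      have hγ : outGamma s cj v tb b (k+1) α = 0 := by
        rcases Nat.lt_or_ge k p with hkp | hkp
        · exact hΓ α ⟨hα0, hα1⟩ (k+1) (Nat.le_add_left 1 k) (by omega)
        · have hk' : k = p := by
            have := Finset.mem_range.mp hk; omega
          rw [hk']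
          exact hΓ1 α ⟨hα0, hα1⟩
      rw [hγ]
      ring
    -- bound the remainder part
    set Q : ℝ := M * h ^ (p+2) / (Nat.factorial (p+1) : ℝ) with hQ
    have hQnn : 0 ≤ Q := by rw [hQ]; positivity
    have hfle : ((Nat.factorial (p+1) : ℝ)) ≤ ((Nat.factorial (p+2) : ℝ)) := by
      exact_mod_cast Nat.factorial_le (by omega)
    have hd1 : (0:ℝ) < (Nat.factorial (p+1) : ℝ) := Nat.cast_pos.mpr (Nat.factorial_pos _)
    have hd2 : (0:ℝ) < (Nat.factorial (p+2) : ℝ) := Nat.cast_pos.mpr (Nat.factorial_pos _)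
    have hnn2 : (0:ℝ) ≤ M * h ^ (p+2) := mul_nonneg hMnn (pow_nonneg hh0 _)
    have e1 : |y (-h) - P (-h)| ≤ Q := by
      have h5 := hrb (-h) (by rwa [abs_neg])
      rw [abs_neg, abs_of_nonneg hh0] at h5
      refine h5.trans ?_
      rw [hQ]
      exact div_le_div_of_nonneg_left hnn2 hd1 hfle
    have e2 : |y (α*h) - P (α*h)| ≤ Q := by
      have hah : |α*h| ≤ h := by
        rw [abs_mul, abs_of_nonneg hα0, abs_of_nonneg hh0]
        nlinarith
      have h5 := hrb (α*h) (hah.trans hh1)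
      refine h5.trans ?_
      rw [hQ]
      calc M * |α*h| ^ (p+2) / (Nat.factorial (p+2) : ℝ)
          ≤ M * h ^ (p+2) / (Nat.factorial (p+2) : ℝ) := by
            apply div_le_div_of_nonneg_right ?_ hd2.le
            exact mul_le_mul_of_nonneg_left (pow_le_pow_left₀ (abs_nonneg _) hah _) hMnn
        _ ≤ M * h ^ (p+2) / (Nat.factorial (p+1) : ℝ) :=
            div_le_div_of_nonneg_left hnn2 hd1 hfle
    have e3 : ∀ j : Fin s, |deriv y (-h + cj j * h) - deriv P (-h + cj j * h)|
        ≤ M * h ^ (p+1) / (Nat.factorial (p+1) : ℝ) := by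
      intro j
      have harg : |-h + cj j * h| ≤ h := by
        rw [abs_le]
        constructor <;> nlinarith [(hcj j).1, (hcj j).2]
      have h5 := hdrb (-h + cj j * h) (harg.trans hh1)
      refine h5.trans ?_
      apply div_le_div_of_nonneg_right ?_ hd1.le
      exact mul_le_mul_of_nonneg_left (pow_le_pow_left₀ (abs_nonneg _) harg _) hMnn
    have e4 : ∀ j : Fin s, |deriv y (cj j * h) - deriv P (cj j * h)|
        ≤ M * h ^ (p+1) / (Nat.factorial (p+1) : ℝ) := by
      intro j
      have harg : |cj j * h| ≤ h := by
        rw [abs_mul, abs_of_nonneg (hcj j).1, abs_of_nonneg hh0]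
        nlinarith [(hcj j).1, (hcj j).2]
      have h5 := hdrb (cj j * h) (harg.trans hh1)
      refine h5.trans ?_
      apply div_le_div_of_nonneg_right ?_ hd1.le
      exact mul_le_mul_of_nonneg_left (pow_le_pow_left₀ (abs_nonneg _) harg _) hMnn
    -- now assemble
    have hr0 : y 0 - P 0 = 0 := by
      rw [hPdef]
      simp only [ha]
      rw [Finset.sum_range_succ']
      simp
    have hdsub : ∀ t : ℝ, deriv (fun x => y x - P x) t = deriv y t - deriv P t :=
      fun t => deriv_sub (hydiff t) (hPdiff t)
    have hRbound : |outError s cj v tb b (fun x => y x - P x) h α| ≤ F α * Q := by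
      unfold outError
      simp only [hdsub, hr0, mul_zero, add_zero]
      have hsum1 : |∑ j, (tb j).eval α * (deriv y (-h + cj j * h) - deriv P (-h + cj j * h))|
          ≤ (∑ j, |(tb j).eval α|) * (M * h ^ (p+1) / (Nat.factorial (p+1) : ℝ)) := by
        refine (Finset.abs_sum_le_sum_abs _ _).trans ?_
        rw [Finset.sum_mul]
        refine Finset.sum_le_sum fun j _ => ?_
        rw [abs_mul]
        exact mul_le_mul_of_nonneg_left (e3 j) (abs_nonneg _)
      have hsum2 : |∑ j, (b j).eval α * (deriv y (cj j * h) - deriv P (cj j * h))|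
          ≤ (∑ j, |(b j).eval α|) * (M * h ^ (p+1) / (Nat.factorial (p+1) : ℝ)) := by
        refine (Finset.abs_sum_le_sum_abs _ _).trans ?_
        rw [Finset.sum_mul]
        refine Finset.sum_le_sum fun j _ => ?_
        rw [abs_mul]
        exact mul_le_mul_of_nonneg_left (e4 j) (abs_nonneg _)
      have hhQ : h * (M * h ^ (p+1) / (Nat.factorial (p+1) : ℝ)) = Q := by
        rw [hQ, pow_succ]
        ring
      calc |(1 - v.eval α) * (y (-h) - P (-h))
            + h * ∑ j, (tb j).eval α * (deriv y (-h + cj j * h) - deriv P (-h + cj j * h))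
            + h * ∑ j, (b j).eval α * (deriv y (cj j * h) - deriv P (cj j * h))
            - (y (α*h) - P (α*h))|
          ≤ |(1 - v.eval α) * (y (-h) - P (-h))
            + h * ∑ j, (tb j).eval α * (deriv y (-h + cj j * h) - deriv P (-h + cj j * h))
            + h * ∑ j, (b j).eval α * (deriv y (cj j * h) - deriv P (cj j * h))|
            + |y (α*h) - P (α*h)| := abs_sub _ _
        _ ≤ |(1 - v.eval α) * (y (-h) - P (-h))
            + h * ∑ j, (tb j).eval α * (deriv y (-h + cj j * h) - deriv P (-h + cj j * h))|
            + |h * ∑ j, (b j).eval α * (deriv y (cj j * h) - deriv P (cj j * h))|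
            + |y (α*h) - P (α*h)| := by
            have := abs_add_le ((1 - v.eval α) * (y (-h) - P (-h))
              + h * ∑ j, (tb j).eval α * (deriv y (-h + cj j * h) - deriv P (-h + cj j * h)))
              (h * ∑ j, (b j).eval α * (deriv y (cj j * h) - deriv P (cj j * h)))
            linarith
        _ ≤ |(1 - v.eval α) * (y (-h) - P (-h))|
            + |h * ∑ j, (tb j).eval α * (deriv y (-h + cj j * h) - deriv P (-h + cj j * h))|
            + |h * ∑ j, (b j).eval α * (deriv y (cj j * h) - deriv P (cj j * h))|
            + |y (α*h) - P (α*h)| := by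
            have := abs_add_le ((1 - v.eval α) * (y (-h) - P (-h)))
              (h * ∑ j, (tb j).eval α * (deriv y (-h + cj j * h) - deriv P (-h + cj j * h)))
            linarith
        _ ≤ |1 - v.eval α| * Q
            + (∑ j, |(tb j).eval α|) * Q
            + (∑ j, |(b j).eval α|) * Q
            + Q := by
            have b1 : |(1 - v.eval α) * (y (-h) - P (-h))| ≤ |1 - v.eval α| * Q := by
              rw [abs_mul]
              exact mul_le_mul_of_nonneg_left e1 (abs_nonneg _)
            have b2 : |h * ∑ j, (tb j).eval α * (deriv y (-h + cj j * h) - deriv P (-h + cj j * h))|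
                ≤ (∑ j, |(tb j).eval α|) * Q := by
              rw [abs_mul, abs_of_nonneg hh0]
              calc h * |∑ j, (tb j).eval α * (deriv y (-h + cj j * h) - deriv P (-h + cj j * h))|
                  ≤ h * ((∑ j, |(tb j).eval α|) * (M * h ^ (p+1) / (Nat.factorial (p+1) : ℝ))) :=
                    mul_le_mul_of_nonneg_left hsum1 hh0
                _ = (∑ j, |(tb j).eval α|) * (h * (M * h ^ (p+1) / (Nat.factorial (p+1) : ℝ))) := by
                    ring
                _ = (∑ j, |(tb j).eval α|) * Q := by rw [hhQ]
            have b3 : |h * ∑ j, (b j).eval α * (deriv y (cj j * h) - deriv P (cj j * h))|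
                ≤ (∑ j, |(b j).eval α|) * Q := by
              rw [abs_mul, abs_of_nonneg hh0]
              calc h * |∑ j, (b j).eval α * (deriv y (cj j * h) - deriv P (cj j * h))|
                  ≤ h * ((∑ j, |(b j).eval α|) * (M * h ^ (p+1) / (Nat.factorial (p+1) : ℝ))) :=
                    mul_le_mul_of_nonneg_left hsum2 hh0
                _ = (∑ j, |(b j).eval α|) * (h * (M * h ^ (p+1) / (Nat.factorial (p+1) : ℝ))) := by
                    ring
                _ = (∑ j, |(b j).eval α|) * Q := by rw [hhQ]
            linarith
        _ = F α * Q := by rw [hF]; ring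
    have hFK : F α * Q ≤ K * Q := mul_le_mul_of_nonneg_right (hK' α ⟨hα0, hα1⟩) hQnn
    have hfin : K * Q ≤ (K * M / (Nat.factorial (p+1) : ℝ) + 1) * h ^ (p+2) := by
      have hpow : (0:ℝ) ≤ h ^ (p+2) := by positivity
      have : K * Q = (K * M / (Nat.factorial (p+1) : ℝ)) * h ^ (p+2) := by
        rw [hQ]; ring
      nlinarith
    calc |outError s cj v tb b y h α|
        = |outError s cj v tb b (fun x => y x - P x) h α| := by
          rw [hsplit, hOP, zero_add]
      _ ≤ F α * Q := hRbound
      _ ≤ K * Q := hFK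
      _ ≤ (K * M / (Nat.factorial (p+1) : ℝ) + 1) * h ^ (p+2) := hfin
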